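/- Let r ∈ ℓ²(ℤ) have nonnegative entries, with norm ‖r‖ and tail norms E_N(r). There is an absolute constant C such that for every N ≥ 1, Σ_{|n|>N} Σ_{i,j,p≠n} r(n+i)²r(j+p)²/(|n-i||n-j|(n-p)²) ≤ C(‖r‖²/N + E_N(r)²)·‖r‖². -/

import Mathlib

open ENNReal

noncomputable def auxw (k : ℤ) : ℝ≥0∞ := ENNReal.ofReal (1 / (k:ℝ)^2)

lemma auxw_even (k : ℤ) : auxw (-k) = auxw k := by simp [auxw]

lemma auxw_le_one (k : ℤ) : auxw k ≤ 1 := by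
  rcases eq_or_ne k 0 with rfl | hk
  · simp [auxw]
  · have h1 : (1:ℝ) ≤ (k:ℝ)^2 := by
      have : (1:ℤ) ≤ k^2 := by
        rcases lt_or_gt_of_ne hk with h | h <;> nlinarith
      exact_mod_cast this
    simp only [auxw]
    rw [← ENNReal.ofReal_one]
    exact ENNReal.ofReal_le_ofReal (by
      rw [div_le_one (by linarith)]; linarith)

lemma aux_ofReal_tsum_le {ι : Type*} (f : ι → ℝ) (hf : ∀ i, 0 ≤ f i) :
    ENNReal.ofReal (∑' i, f i) ≤ ∑' i, ENNReal.ofReal (f i) := by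
  by_cases h : Summable f
  · rw [ENNReal.ofReal_tsum_of_nonneg hf h]
  · simp [tsum_eq_zero_of_not_summable h]

lemma aux_natTail (K : ℕ) (hK : 1 ≤ K) :
    ∑' a : ℕ, ENNReal.ofReal (1 / ((K:ℝ) + a)^2) ≤ ENNReal.ofReal (2 / K) := by
  have hKR : (1:ℝ) ≤ K := by exact_mod_cast hK
  set g : ℕ → ℝ := fun a => 2 / ((K:ℝ) + a) with hg
  have hgpos : ∀ a : ℕ, (0:ℝ) < (K:ℝ) + a := by
    intro a; have : (0:ℝ) ≤ a := Nat.cast_nonneg a; linarith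
  have hgdiff : ∀ a : ℕ, g a - g (a+1) = 2 / (((K:ℝ) + a) * ((K:ℝ) + a + 1)) := by
    intro a
    have h2 := hgpos a
    simp only [hg]; push_cast; field_simp; ring
  have hterm : ∀ a : ℕ, 1 / ((K:ℝ) + a)^2 ≤ g a - g (a+1) := by
    intro a
    have h1 : (1:ℝ) ≤ (K:ℝ) + a := by
      have : (0:ℝ) ≤ a := Nat.cast_nonneg a; linarith
    rw [hgdiff a, div_le_div_iff₀ (by positivity) (by positivity)]
    nlinarith
  have hgsum : HasSum (fun a : ℕ => g a - g (a+1)) (2 / K) := by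
    rw [hasSum_iff_tendsto_nat_of_nonneg]
    · have hps : ∀ n : ℕ, ∑ i ∈ Finset.range n, (g i - g (i+1)) = g 0 - g n := by
        intro n
        induction n with
        | zero => simp
        | succ m ih => rw [Finset.sum_range_succ, ih]; ring
      simp only [hps]
      have htend : Filter.Tendsto (fun n : ℕ => g n) Filter.atTop (nhds 0) := by
        have h1 : Filter.Tendsto (fun n : ℕ => (2:ℝ) / n) Filter.atTop (nhds 0) :=
          tendsto_const_div_atTop_nhds_zero_nat 2
        have h2 : Filter.Tendsto (fun n : ℕ => n + K) Filter.atTop Filter.atTop :=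
          Filter.tendsto_add_atTop_nat K
        have h3 := h1.comp h2
        convert h3 using 2 with n
        simp only [hg, Function.comp_apply]
        push_cast; ring_nf
      have : g 0 = 2 / K := by simp [hg]
      rw [← this]
      simpa using Filter.Tendsto.sub tendsto_const_nhds htend
    · intro i
      rw [hgdiff i]
      have := hgpos i
      positivity
  have hsummable : Summable (fun a : ℕ => 1 / ((K:ℝ) + a)^2) := by
    apply Summable.of_nonneg_of_le (fun a => by positivity) hterm hgsum.summable
  have htsum_le : ∑' a : ℕ, 1 / ((K:ℝ) + a)^2 ≤ 2 / (K:ℝ) := by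
    rw [← hgsum.tsum_eq]
    exact Summable.tsum_le_tsum hterm hsummable hgsum.summable
  calc ∑' a : ℕ, ENNReal.ofReal (1 / ((K:ℝ) + a)^2)
      = ENNReal.ofReal (∑' a : ℕ, 1 / ((K:ℝ) + a)^2) :=
        (ENNReal.ofReal_tsum_of_nonneg (fun a => by positivity) hsummable).symm
    _ ≤ ENNReal.ofReal (2 / K) := ENNReal.ofReal_le_ofReal htsum_le

lemma aux_wtail (K : ℕ) (hK : 1 ≤ K) :
    ∑' k : ℤ, (if (K:ℤ) ≤ |k| then auxw k else 0) ≤ ENNReal.ofReal (4 / K) := by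
  set f : ℤ → ℝ≥0∞ := fun k => if (K:ℤ) ≤ |k| then auxw k else 0 with hf
  have hsplit : ∑' k : ℤ, f k = (∑' n : ℕ, f n) + ∑' n : ℕ, f (-(n+1)) :=
    tsum_of_nat_of_neg_add_one ENNReal.summable ENNReal.summable
  have hpos : ∑' n : ℕ, f n ≤ ENNReal.ofReal (2 / K) := by
    have hre : ∑' n : ℕ, (fun m : ℕ => f (m:ℤ)) (n + K) = ∑' n : ℕ, f (n:ℤ) := by
      refine Function.Injective.tsum_eq (f := fun m : ℕ => f (m:ℤ))
        (g := fun n : ℕ => n + K) (add_left_injective K) ?_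
      intro x hx
      simp only [Function.mem_support, hf] at hx
      by_contra hr
      simp only [Set.mem_range, not_exists] at hr
      have hxK : ¬ ((K:ℤ) ≤ |(x:ℤ)|) := by
        rw [abs_of_nonneg (Int.natCast_nonneg x)]
        by_contra hc
        have : K ≤ x := by omega
        exact hr (x - K) (by omega)
      rw [if_neg hxK] at hx; exact hx rfl
    rw [← hre]
    have heq : ∀ n : ℕ, (fun m : ℕ => f (m:ℤ)) (n + K) = ENNReal.ofReal (1 / ((K:ℝ) + n)^2) := by
      intro n
      have hc : (K:ℤ) ≤ |((n + K : ℕ) : ℤ)| := by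
        rw [abs_of_nonneg (by positivity)]; omega
      simp only [hf, if_pos hc, auxw]
      norm_num
      congr 2
      push_cast; ring
    rw [tsum_congr heq]
    exact aux_natTail K hK
  have hneg : ∑' n : ℕ, f (-((n:ℤ)+1)) ≤ ENNReal.ofReal (2 / K) := by
    have hre : ∑' n : ℕ, (fun m : ℕ => f (-((m:ℤ)+1))) (n + (K-1)) =
        ∑' n : ℕ, f (-((n:ℤ)+1)) := by
      refine Function.Injective.tsum_eq (f := fun m : ℕ => f (-((m:ℤ)+1)))
        (g := fun n : ℕ => n + (K-1)) (add_left_injective (K-1)) ?_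
      intro x hx
      simp only [Function.mem_support, hf] at hx
      by_contra hr
      simp only [Set.mem_range, not_exists] at hr
      have hxK : ¬ ((K:ℤ) ≤ |(-((x:ℤ)+1))|) := by
        rw [abs_neg, abs_of_nonneg (by positivity)]
        by_contra hc
        have : K - 1 ≤ x := by omega
        exact hr (x - (K-1)) (by omega)
      rw [if_neg hxK] at hx; exact hx rfl
    rw [← hre]
    have heq : ∀ n : ℕ, (fun m : ℕ => f (-((m:ℤ)+1))) (n + (K-1)) =
        ENNReal.ofReal (1 / ((K:ℝ) + n)^2) := by
      intro n
      have harg : (-(((n + (K-1) : ℕ) : ℤ)+1)) = -((K:ℤ) + n) := by omega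
      simp only [harg, hf]
      rw [if_pos (show (K:ℤ) ≤ |(-((K:ℤ) + n))| by
        rw [abs_neg, abs_of_nonneg (by positivity)]; omega)]
      simp only [auxw]
      congr 1
      push_cast; ring
    rw [tsum_congr heq]
    exact aux_natTail K hK
  rw [hsplit]
  calc (∑' n : ℕ, f n) + ∑' n : ℕ, f (-((n:ℤ)+1))
      ≤ ENNReal.ofReal (2 / K) + ENNReal.ofReal (2 / K) := add_le_add hpos hneg
    _ = ENNReal.ofReal (4 / K) := by
        rw [← ENNReal.ofReal_add (by positivity) (by positivity)]; ring_nf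

lemma aux_wfull : ∑' k : ℤ, auxw k ≤ 4 := by
  have h : ∀ k : ℤ, auxw k = (if (1:ℤ) ≤ |k| then auxw k else 0) := by
    intro k
    rcases eq_or_ne k 0 with rfl | hk
    · simp [auxw]
    · rw [if_pos (Int.one_le_abs hk)]
  rw [tsum_congr h]
  have := aux_wtail 1 le_rfl
  simpa using this

-- atom split inequality
lemma aux_atom (a b x y z : ℝ) (ha : 0 ≤ a) (hb : 0 ≤ b) (hx : x ≠ 0) (hy : y ≠ 0) :
    ENNReal.ofReal (a * b / (|x| * |y| * z^2)) ≤
      ENNReal.ofReal a * ENNReal.ofReal (1/x^2) *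
        (ENNReal.ofReal b * ENNReal.ofReal (1/z^2)) +
      ENNReal.ofReal a * (ENNReal.ofReal b * (ENNReal.ofReal (1/y^2) * ENNReal.ofReal (1/z^2))) := by
  have hcol : ENNReal.ofReal a * ENNReal.ofReal (1/x^2) *
        (ENNReal.ofReal b * ENNReal.ofReal (1/z^2)) +
      ENNReal.ofReal a * (ENNReal.ofReal b * (ENNReal.ofReal (1/y^2) * ENNReal.ofReal (1/z^2)))
      = ENNReal.ofReal (a * (1/x^2) * (b * (1/z^2)) + a * (b * ((1/y^2) * (1/z^2)))) := by
    have e1 : ∀ u v : ℝ, 0 ≤ u → ENNReal.ofReal u * ENNReal.ofReal v = ENNReal.ofReal (u*v) :=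
      fun u v hu => (ENNReal.ofReal_mul hu).symm
    rw [e1 a (1/x^2) ha, e1 b (1/z^2) hb, e1 (a*(1/x^2)) (b*(1/z^2)) (by positivity),
        e1 (1/y^2) (1/z^2) (by positivity), e1 b ((1/y^2) * (1/z^2)) hb,
        e1 a (b * ((1/y^2) * (1/z^2))) ha, ← ENNReal.ofReal_add (by positivity) (by positivity)]
  rw [hcol]
  apply ENNReal.ofReal_le_ofReal
  rcases eq_or_ne z 0 with rfl | hz
  · rw [show (0:ℝ)^2 = 0 by ring, mul_zero, _root_.div_zero]
    positivity
  · have hxx : (0:ℝ) < x^2 := by positivity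
    have hyy : (0:ℝ) < y^2 := by positivity
    have hax : (0:ℝ) < |x| := abs_pos.mpr hx
    have hay : (0:ℝ) < |y| := abs_pos.mpr hy
    have hzz : (0:ℝ) < z^2 := by positivity
    have h1 : 1/(|x| * |y|) ≤ 1/x^2 + 1/y^2 := by
      rw [div_add_div _ _ (ne_of_gt hxx) (ne_of_gt hyy),
          div_le_div_iff₀ (by positivity) (by positivity)]
      nlinarith [sq_abs x, sq_abs y, sq_nonneg (|x| - |y|), mul_pos hax hay]
    have h2 : a * b / (|x| * |y| * z^2) = (a*b/z^2) * (1/(|x| * |y|)) := by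
      field_simp
    rw [h2]
    have h3 : (a*b/z^2) * (1/(|x| * |y|)) ≤ (a*b/z^2) * (1/x^2 + 1/y^2) :=
      mul_le_mul_of_nonneg_left h1 (by positivity)
    apply h3.trans
    apply le_of_eq
    field_simp

-- partial fraction inequality
lemma aux_pf (x y : ℝ) (hxy : x ≠ y) :
    ENNReal.ofReal (1/x^2) * ENNReal.ofReal (1/y^2) ≤
      2 * (ENNReal.ofReal (1/(x-y)^2) * (ENNReal.ofReal (1/x^2) + ENNReal.ofReal (1/y^2))) := by
  rcases eq_or_ne x 0 with rfl | hx
  · simp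
  rcases eq_or_ne y 0 with rfl | hy
  · simp
  have hu : x - y ≠ 0 := sub_ne_zero.mpr hxy
  have hcol : (2:ℝ≥0∞) * (ENNReal.ofReal (1/(x-y)^2) * (ENNReal.ofReal (1/x^2) + ENNReal.ofReal (1/y^2)))
      = ENNReal.ofReal (2 * ((1/(x-y)^2) * (1/x^2 + 1/y^2))) := by
    rw [ENNReal.ofReal_mul (by norm_num), ENNReal.ofReal_mul (by positivity),
        ENNReal.ofReal_add (by positivity) (by positivity)]
    norm_num
  rw [hcol, ← ENNReal.ofReal_mul (by positivity)]
  apply ENNReal.ofReal_le_ofReal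
  have hx2 : (0:ℝ) < x^2 := by positivity
  have hy2 : (0:ℝ) < y^2 := by positivity
  have hu2 : (0:ℝ) < (x-y)^2 := by positivity
  rw [div_mul_div_comm, one_mul]
  have hrhs : 2 * ((1/(x-y)^2) * (1/x^2 + 1/y^2)) = (2*(y^2+x^2))/((x-y)^2*(x^2*y^2)) := by
    rw [div_add_div _ _ (ne_of_gt hx2) (ne_of_gt hy2)]
    field_simp
  rw [hrhs, div_le_div_iff₀ (by positivity) (by positivity)]
  nlinarith [sq_nonneg (x+y), mul_pos hx2 hy2, sq_nonneg ((x-y)*(x*y))]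

section
variable (R : ℤ → ℝ≥0∞) (N : ℕ)

lemma aux_tail_eq :
    ∑' m : {m : ℤ // (N:ℤ) ≤ |m|}, R m = ∑' k : ℤ, (if (N:ℤ) ≤ |k| then R k else 0) := by
  have h := tsum_subtype {m : ℤ | (N:ℤ) ≤ |m|} R
  refine h.trans (tsum_congr fun k => ?_)
  simp only [Set.indicator_apply, Set.mem_setOf_eq]

lemma aux_comp_full {ι : Type*} (h : ι → ℤ) (hinj : Function.Injective h) :
    ∑' x, R (h x) ≤ ∑' k, R k :=
  ENNReal.tsum_comp_le_tsum_of_injective hinj R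

lemma aux_comp_tail {ι : Type*} (h : ι → ℤ) (hinj : Function.Injective h)
    (hbd : ∀ x, (N:ℤ) ≤ |h x|) :
    ∑' x, R (h x) ≤ ∑' m : {m : ℤ // (N:ℤ) ≤ |m|}, R m := by
  have h2 : Function.Injective (fun x => (⟨h x, hbd x⟩ : {m : ℤ // (N:ℤ) ≤ |m|})) := by
    intro a b hab
    exact hinj (congrArg Subtype.val hab)
  exact ENNReal.tsum_comp_le_tsum_of_injective h2 (fun m => R m)

lemma aux_B (hN : 1 ≤ N) :
    ∑' n : {n : ℤ // (N:ℤ) < |n|}, ∑' i : {i : ℤ // i ≠ (n:ℤ)}, R ((n:ℤ) + i) * auxw ((n:ℤ) - i)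
      ≤ (∑' m : {m : ℤ // (N:ℤ) ≤ |m|}, R m) * 4 + (∑' k, R k) * ENNReal.ofReal (4 / N) := by
  set τ := ∑' m : {m : ℤ // (N:ℤ) ≤ |m|}, R m
  set σ := ∑' k : ℤ, R k
  have step1 : ∀ n : {n : ℤ // (N:ℤ) < |n|},
      ∑' i : {i : ℤ // i ≠ (n:ℤ)}, R ((n:ℤ) + i) * auxw ((n:ℤ) - i)
        ≤ ∑' d : ℤ, R (2*(n:ℤ) - d) * auxw d := by
    intro n
    have hinj : Function.Injective (fun i : {i : ℤ // i ≠ (n:ℤ)} => (n:ℤ) - i) := by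
      intro a b hab
      have hab' : (n:ℤ) - a = (n:ℤ) - b := hab
      exact Subtype.ext (by omega)
    have := ENNReal.tsum_comp_le_tsum_of_injective hinj (fun d => R (2*(n:ℤ) - d) * auxw d)
    refine le_trans (le_of_eq ?_) this
    apply tsum_congr
    intro i
    show R ((n:ℤ) + i) * auxw ((n:ℤ) - i) = R (2*(n:ℤ) - ((n:ℤ) - i)) * auxw ((n:ℤ) - i)
    rw [show 2*(n:ℤ) - ((n:ℤ) - (i:ℤ)) = (n:ℤ) + i by ring]
  calc ∑' n : {n : ℤ // (N:ℤ) < |n|}, ∑' i : {i : ℤ // i ≠ (n:ℤ)}, R ((n:ℤ) + i) * auxw ((n:ℤ) - i)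
      ≤ ∑' n : {n : ℤ // (N:ℤ) < |n|}, ∑' d : ℤ, R (2*(n:ℤ) - d) * auxw d :=
        ENNReal.tsum_le_tsum step1
    _ = ∑' d : ℤ, ∑' n : {n : ℤ // (N:ℤ) < |n|}, R (2*(n:ℤ) - d) * auxw d := ENNReal.tsum_comm
    _ = ∑' d : ℤ, (∑' n : {n : ℤ // (N:ℤ) < |n|}, R (2*(n:ℤ) - d)) * auxw d := by
        apply tsum_congr; intro d; rw [ENNReal.tsum_mul_right]
    _ ≤ ∑' d : ℤ, (τ * auxw d + σ * (if (N:ℤ)+1 ≤ |d| then auxw d else 0)) := by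
        apply ENNReal.tsum_le_tsum
        intro d
        by_cases hd : |d| ≤ (N:ℤ)
        · have hb : ∑' n : {n : ℤ // (N:ℤ) < |n|}, R (2*(n:ℤ) - d) ≤ τ := by
            apply aux_comp_tail
            · intro a b hab
              have hab' : 2*((a:ℤ)) - d = 2*((b:ℤ)) - d := hab
              exact Subtype.ext (by omega)
            · intro n
              have h1 : |2*(n:ℤ)| - |d| ≤ |2*(n:ℤ) - d| := abs_sub_abs_le_abs_sub _ _
              have h2 : |2*(n:ℤ)| = 2 * |(n:ℤ)| := by
                rw [abs_mul]; norm_num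
              have h3 := n.2
              omega
          exact le_trans (mul_le_mul_left hb _) le_self_add
        · have hb : ∑' n : {n : ℤ // (N:ℤ) < |n|}, R (2*(n:ℤ) - d) ≤ σ := by
            apply aux_comp_full
            intro a b hab
            have hab' : 2*((a:ℤ)) - d = 2*((b:ℤ)) - d := hab
            exact Subtype.ext (by omega)
          rw [if_pos (by omega)]
          exact le_trans (mul_le_mul_left hb _) le_add_self
    _ = τ * (∑' d : ℤ, auxw d) + σ * (∑' d : ℤ, (if (N:ℤ)+1 ≤ |d| then auxw d else 0)) := by
        rw [ENNReal.tsum_add, ENNReal.tsum_mul_left, ENNReal.tsum_mul_left]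
    _ ≤ τ * 4 + σ * ENNReal.ofReal (4 / N) := by
        apply add_le_add
        · exact mul_le_mul_right aux_wfull _
        · apply mul_le_mul_right
          have h1 : ∑' d : ℤ, (if (N:ℤ)+1 ≤ |d| then auxw d else 0) ≤ ENNReal.ofReal (4/(N+1:ℕ)) := by
            have := aux_wtail (N+1) (by omega)
            refine le_trans (le_of_eq (tsum_congr fun d => ?_)) this
            push_cast
            rfl
          apply h1.trans
          apply ENNReal.ofReal_le_ofReal
          have hNpos : (0:ℝ) < (N:ℝ) := by
            have : (1:ℝ) ≤ (N:ℝ) := by exact_mod_cast hN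
            linarith
          gcongr
          · push_cast; linarith
end

section
variable (R : ℤ → ℝ≥0∞) (N : ℕ)

lemma aux_w_small (d : ℤ) (K : ℕ) (hK : 1 ≤ K) (h : (K:ℤ) ≤ |2*d|) :
    auxw d ≤ ENNReal.ofReal (4/(K:ℝ)^2) := by
  have hd : d ≠ 0 := by rintro rfl; simp at h; omega
  have h2 : (K:ℤ)^2 ≤ (2*d)^2 := by
    have := sq_abs (2*d)
    nlinarith [abs_nonneg (2*d), Int.natCast_nonneg K]
  have h3 : (K:ℝ)^2 ≤ 4*(d:ℝ)^2 := by
    have : ((K:ℤ)^2 : ℝ) ≤ (((2*d)^2 : ℤ) : ℝ) := by exact_mod_cast h2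
    push_cast at this
    nlinarith
  apply ENNReal.ofReal_le_ofReal
  rw [div_le_div_iff₀ (by positivity) (by positivity)]
  have hdr : ((d:ℝ))^2 > 0 := by
    have : (d:ℝ) ≠ 0 := Int.cast_ne_zero.mpr hd
    positivity
  nlinarith

-- sum over tail n of auxw (n - j), separated case
lemma aux_s2 (j : ℤ) (K : ℕ) (hK : 1 ≤ K)
    (hsep : ∀ n : {n : ℤ // (N:ℤ) < |n|}, (K:ℤ) ≤ |(n:ℤ) - j|) :
    ∑' n : {n : ℤ // (N:ℤ) < |n|}, auxw ((n:ℤ) - j) ≤ ENNReal.ofReal (4/K) := by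
  have hpt : ∀ n : {n : ℤ // (N:ℤ) < |n|},
      auxw ((n:ℤ) - j) = (fun k : ℤ => if (K:ℤ) ≤ |k| then auxw k else 0) ((n:ℤ) - j) := by
    intro n; simp only [if_pos (hsep n)]
  rw [tsum_congr hpt]
  refine le_trans (ENNReal.tsum_comp_le_tsum_of_injective ?_ _) (aux_wtail K hK)
  intro a b hab
  have hab' : (a:ℤ) - j = (b:ℤ) - j := hab
  exact Subtype.ext (by omega)

lemma aux_s2_full (j : ℤ) :
    ∑' n : {n : ℤ // (N:ℤ) < |n|}, auxw ((n:ℤ) - j) ≤ 4 := by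
  refine le_trans (ENNReal.tsum_comp_le_tsum_of_injective (f := fun n : {n : ℤ // (N:ℤ) < |n|} => (n:ℤ) - j) ?_ auxw) aux_wfull
  intro a b hab
  have hab' : (a:ℤ) - j = (b:ℤ) - j := hab
  exact Subtype.ext (by omega)

lemma aux_D (hN : 1 ≤ N) :
    ∑' n : {n : ℤ // (N:ℤ) < |n|}, ∑' j : {j : ℤ // j ≠ (n:ℤ)},
        R ((j:ℤ) + j) * (auxw ((n:ℤ) - j) * auxw ((n:ℤ) - j))
      ≤ (∑' m : {m : ℤ // (N:ℤ) ≤ |m|}, R m) * 4 + (∑' k, R k) * ENNReal.ofReal (16/N) := by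
  set τ := ∑' m : {m : ℤ // (N:ℤ) ≤ |m|}, R m
  set σ := ∑' k : ℤ, R k
  have step1 : ∀ n : {n : ℤ // (N:ℤ) < |n|},
      ∑' j : {j : ℤ // j ≠ (n:ℤ)}, R ((j:ℤ) + j) * (auxw ((n:ℤ) - j) * auxw ((n:ℤ) - j))
        ≤ ∑' j : ℤ, R (j + j) * (auxw ((n:ℤ) - j) * auxw ((n:ℤ) - j)) := by
    intro n
    exact ENNReal.tsum_comp_le_tsum_of_injective Subtype.val_injective
      (fun j : ℤ => R (j + j) * (auxw ((n:ℤ) - j) * auxw ((n:ℤ) - j)))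
  calc ∑' n : {n : ℤ // (N:ℤ) < |n|}, ∑' j : {j : ℤ // j ≠ (n:ℤ)},
        R ((j:ℤ) + j) * (auxw ((n:ℤ) - j) * auxw ((n:ℤ) - j))
      ≤ ∑' n : {n : ℤ // (N:ℤ) < |n|}, ∑' j : ℤ,
          R (j + j) * (auxw ((n:ℤ) - j) * auxw ((n:ℤ) - j)) := ENNReal.tsum_le_tsum step1
    _ = ∑' j : ℤ, ∑' n : {n : ℤ // (N:ℤ) < |n|},
          R (j + j) * (auxw ((n:ℤ) - j) * auxw ((n:ℤ) - j)) := ENNReal.tsum_comm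
    _ = ∑' j : ℤ, R (j + j) * ∑' n : {n : ℤ // (N:ℤ) < |n|},
          (auxw ((n:ℤ) - j) * auxw ((n:ℤ) - j)) := by
        apply tsum_congr; intro j; rw [ENNReal.tsum_mul_left]
    _ ≤ ∑' j : ℤ, ((if (N:ℤ) ≤ |j + j| then R (j+j) else 0) * 4 + R (j+j) * ENNReal.ofReal (16/N)) := by
        apply ENNReal.tsum_le_tsum
        intro j
        by_cases hj : (N:ℤ) ≤ |j + j|
        · have hs4 : ∑' n : {n : ℤ // (N:ℤ) < |n|}, (auxw ((n:ℤ) - j) * auxw ((n:ℤ) - j)) ≤ 4 := by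
            refine le_trans (ENNReal.tsum_le_tsum (fun n => ?_)) (aux_s2_full N j)
            calc auxw ((n:ℤ) - j) * auxw ((n:ℤ) - j) ≤ 1 * auxw ((n:ℤ) - j) :=
                  mul_le_mul_left (auxw_le_one _) _
              _ = auxw ((n:ℤ) - j) := one_mul _
          rw [if_pos hj]
          exact le_trans (mul_le_mul_right hs4 _) le_self_add
        · have hsmall : ∀ n : {n : ℤ // (N:ℤ) < |n|}, auxw ((n:ℤ) - j) ≤ ENNReal.ofReal (4/(N:ℝ)^2) := by
            intro n
            apply aux_w_small _ N hN
            have h1 : |2*(n:ℤ)| - |j + j| ≤ |2*(n:ℤ) - (j+j)| := abs_sub_abs_le_abs_sub _ _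
            have h2 : |2*(n:ℤ)| = 2*|(n:ℤ)| := by rw [abs_mul]; norm_num
            have h3 := n.2
            have h4 : 2*((n:ℤ) - j) = 2*(n:ℤ) - (j + j) := by ring
            rw [h4]
            omega
          have hs4 : ∑' n : {n : ℤ // (N:ℤ) < |n|}, (auxw ((n:ℤ) - j) * auxw ((n:ℤ) - j))
              ≤ ENNReal.ofReal (16/N) := by
            calc ∑' n : {n : ℤ // (N:ℤ) < |n|}, (auxw ((n:ℤ) - j) * auxw ((n:ℤ) - j))
                ≤ ∑' n : {n : ℤ // (N:ℤ) < |n|}, ENNReal.ofReal (4/(N:ℝ)^2) * auxw ((n:ℤ) - j) :=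
                  ENNReal.tsum_le_tsum (fun n => mul_le_mul_left (hsmall n) _)
              _ = ENNReal.ofReal (4/(N:ℝ)^2) * ∑' n : {n : ℤ // (N:ℤ) < |n|}, auxw ((n:ℤ) - j) :=
                  ENNReal.tsum_mul_left
              _ ≤ ENNReal.ofReal (4/(N:ℝ)^2) * 4 := mul_le_mul_right (aux_s2_full N j) _
              _ = ENNReal.ofReal (16/(N:ℝ)^2) := by
                  rw [show (4:ℝ≥0∞) = ENNReal.ofReal 4 by norm_num,
                      ← ENNReal.ofReal_mul (by positivity)]
                  congr 1; ring
              _ ≤ ENNReal.ofReal (16/N) := by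
                  apply ENNReal.ofReal_le_ofReal
                  have hNR : (1:ℝ) ≤ (N:ℝ) := by exact_mod_cast hN
                  rw [div_le_div_iff₀ (by positivity) (by positivity)]
                  nlinarith
          exact le_trans (mul_le_mul_right hs4 _) le_add_self
    _ = (∑' j : ℤ, (if (N:ℤ) ≤ |j + j| then R (j+j) else 0)) * 4
          + (∑' j : ℤ, R (j+j)) * ENNReal.ofReal (16/N) := by
        rw [ENNReal.tsum_add, ENNReal.tsum_mul_right, ENNReal.tsum_mul_right]
    _ ≤ τ * 4 + σ * ENNReal.ofReal (16/N) := by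
        apply add_le_add
        · apply mul_le_mul_left
          have hh : ∀ j : ℤ, (if (N:ℤ) ≤ |j + j| then R (j+j) else 0)
              = (fun m : ℤ => if (N:ℤ) ≤ |m| then R m else 0) (j + j) := fun j => rfl
          rw [tsum_congr hh]
          have hinj2 : Function.Injective (fun j : ℤ => j + j) := fun a b hab => by
            have h' : a + a = b + b := hab; omega
          have hcomp := ENNReal.tsum_comp_le_tsum_of_injective (f := fun j : ℤ => j + j)
            hinj2 (fun m => if (N:ℤ) ≤ |m| then R m else 0)
          exact le_trans hcomp (le_of_eq (aux_tail_eq R N).symm)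
        · apply mul_le_mul_left
          exact aux_comp_full R (fun j => j + j) (fun a b hab => by
            have h' : a + a = b + b := hab; omega)
end

section
variable (R : ℤ → ℝ≥0∞) (N : ℕ)

lemma aux_c_eq (j : ℤ) :
    ∑' p : ℤ, R (j + p) * auxw (j - p) = ∑' d : ℤ, R (2*j - d) * auxw d := by
  have h := Equiv.tsum_eq (Equiv.subLeft j) (fun d => R (2*j - d) * auxw d)
  rw [← h]
  apply tsum_congr
  intro p
  simp only [Equiv.subLeft_apply]
  rw [show 2*j - (j - p) = j + p by ring]

lemma aux_Ctot :
    ∑' j : ℤ, ∑' p : ℤ, R (j + p) * auxw (j - p) ≤ (∑' k, R k) * 4 := by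
  calc ∑' j : ℤ, ∑' p : ℤ, R (j + p) * auxw (j - p)
      = ∑' j : ℤ, ∑' d : ℤ, R (2*j - d) * auxw d := tsum_congr (fun j => aux_c_eq R j)
    _ = ∑' d : ℤ, ∑' j : ℤ, R (2*j - d) * auxw d := ENNReal.tsum_comm
    _ = ∑' d : ℤ, (∑' j : ℤ, R (2*j - d)) * auxw d := by
        apply tsum_congr; intro d; rw [ENNReal.tsum_mul_right]
    _ ≤ ∑' d : ℤ, (∑' k, R k) * auxw d := by
        apply ENNReal.tsum_le_tsum; intro d
        apply mul_le_mul_left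
        exact aux_comp_full R (fun j => 2*j - d) (fun a b hab => by
          have h' : 2*a - d = 2*b - d := hab; omega)
    _ = (∑' k, R k) * ∑' d : ℤ, auxw d := ENNReal.tsum_mul_left
    _ ≤ (∑' k, R k) * 4 := mul_le_mul_right aux_wfull _

lemma aux_Cbig (hN : 1 ≤ N) :
    ∑' j : ℤ, (if (3*(N:ℤ)+1 ≤ |4*j|) then (∑' p : ℤ, R (j + p) * auxw (j - p)) else 0)
      ≤ (∑' m : {m : ℤ // (N:ℤ) ≤ |m|}, R m) * 4 + (∑' k, R k) * ENNReal.ofReal (8/N) := by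
  set τ := ∑' m : {m : ℤ // (N:ℤ) ≤ |m|}, R m
  set σ := ∑' k : ℤ, R k
  set K₂ : ℕ := N/2 + 1 with hK₂
  have hstep : ∀ j : ℤ, (if (3*(N:ℤ)+1 ≤ |4*j|) then (∑' p : ℤ, R (j + p) * auxw (j - p)) else 0)
      = ∑' d : ℤ, (if (3*(N:ℤ)+1 ≤ |4*j|) then R (2*j - d) * auxw d else 0) := by
    intro j
    by_cases hj : (3*(N:ℤ)+1 ≤ |4*j|)
    · simp only [if_pos hj]; exact aux_c_eq R j
    · simp only [if_neg hj]; rw [tsum_zero]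
  calc ∑' j : ℤ, (if (3*(N:ℤ)+1 ≤ |4*j|) then (∑' p : ℤ, R (j + p) * auxw (j - p)) else 0)
      = ∑' j : ℤ, ∑' d : ℤ, (if (3*(N:ℤ)+1 ≤ |4*j|) then R (2*j - d) * auxw d else 0) :=
        tsum_congr hstep
    _ = ∑' d : ℤ, ∑' j : ℤ, (if (3*(N:ℤ)+1 ≤ |4*j|) then R (2*j - d) * auxw d else 0) :=
        ENNReal.tsum_comm
    _ ≤ ∑' d : ℤ, (τ * auxw d + σ * (if (K₂:ℤ) ≤ |d| then auxw d else 0)) := by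
        apply ENNReal.tsum_le_tsum
        intro d
        by_cases hd : |2*d| ≤ (N:ℤ)
        · -- tail case
          have hpt : ∀ j : ℤ, (if (3*(N:ℤ)+1 ≤ |4*j|) then R (2*j - d) * auxw d else 0)
              ≤ (fun m : ℤ => if (N:ℤ) ≤ |m| then R m else 0) (2*j - d) * auxw d := by
            intro j
            by_cases hj : (3*(N:ℤ)+1 ≤ |4*j|)
            · rw [if_pos hj]
              simp only []
              have hcond : (N:ℤ) ≤ |2*j - d| := by
                have h1 : |4*j| - |2*d| ≤ |4*j - 2*d| := abs_sub_abs_le_abs_sub _ _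
                have h2 : |4*j - 2*d| = 2 * |2*j - d| := by
                  rw [show 4*j - 2*d = 2*(2*j - d) by ring, abs_mul]
                  norm_num
                omega
              rw [if_pos hcond]
            · rw [if_neg hj]; exact zero_le
          refine le_trans (ENNReal.tsum_le_tsum hpt) ?_
          rw [ENNReal.tsum_mul_right]
          apply le_trans (mul_le_mul_left ?_ _) le_self_add
          have hinj2 : Function.Injective (fun j : ℤ => 2*j - d) := fun a b hab => by
            have h' : 2*a - d = 2*b - d := hab; omega
          have hcomp := ENNReal.tsum_comp_le_tsum_of_injective (f := fun j : ℤ => 2*j - d)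
            hinj2 (fun m => if (N:ℤ) ≤ |m| then R m else 0)
          exact le_trans hcomp (le_of_eq (aux_tail_eq R N).symm)
        · -- big d case
          have hpt : ∀ j : ℤ, (if (3*(N:ℤ)+1 ≤ |4*j|) then R (2*j - d) * auxw d else 0)
              ≤ R (2*j - d) * auxw d := by
            intro j
            by_cases hj : (3*(N:ℤ)+1 ≤ |4*j|)
            · rw [if_pos hj]
            · rw [if_neg hj]; exact zero_le
          refine le_trans (ENNReal.tsum_le_tsum hpt) ?_
          rw [ENNReal.tsum_mul_right]
          have hcond : ((K₂:ℕ):ℤ) ≤ |d| := by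
            have h2 : |2*d| = 2 * |d| := by rw [abs_mul]; norm_num
            have h3 : 2*(K₂:ℕ) ≤ N + 2 := by omega
            omega
          calc (∑' j : ℤ, R (2*j - d)) * auxw d
              ≤ σ * auxw d := mul_le_mul_left (aux_comp_full R (fun j => 2*j - d)
                (fun a b hab => by have h' : 2*a - d = 2*b - d := hab; omega)) _
            _ = σ * (if (K₂:ℤ) ≤ |d| then auxw d else 0) := by rw [if_pos hcond]
            _ ≤ τ * auxw d + σ * (if (K₂:ℤ) ≤ |d| then auxw d else 0) := le_add_self
    _ = τ * (∑' d : ℤ, auxw d) + σ * ∑' d : ℤ, (if (K₂:ℤ) ≤ |d| then auxw d else 0) := by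
        rw [ENNReal.tsum_add, ENNReal.tsum_mul_left, ENNReal.tsum_mul_left]
    _ ≤ τ * 4 + σ * ENNReal.ofReal (8/N) := by
        apply add_le_add
        · exact mul_le_mul_right aux_wfull _
        · apply mul_le_mul_right
          refine le_trans (aux_wtail K₂ (by omega)) (ENNReal.ofReal_le_ofReal ?_)
          have h4 : 4 * N ≤ 8 * K₂ := by omega
          have hNR : (0:ℝ) < (N:ℝ) := by
            have : (1:ℕ) ≤ N := hN; positivity
          have hKR : (0:ℝ) < (K₂:ℝ) := by positivity
          rw [div_le_div_iff₀ hKR hNR]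
          have : ((4 * N : ℕ) : ℝ) ≤ ((8 * K₂ : ℕ) : ℝ) := by exact_mod_cast h4
          push_cast at this ⊢
          linarith
end

section
variable (R : ℤ → ℝ≥0∞) (N : ℕ)

lemma aux_O1 (hN : 1 ≤ N) :
    ∑' n : {n : ℤ // (N:ℤ) < |n|}, ∑' j : {j : ℤ // j ≠ (n:ℤ)}, ∑' p : {p : ℤ // p ≠ (n:ℤ)},
        R ((j:ℤ) + p) * (auxw ((j:ℤ) - p) * auxw ((n:ℤ) - j))
      ≤ (∑' k, R k) * 4 * ENNReal.ofReal (16/N)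
        + ((∑' m : {m : ℤ // (N:ℤ) ≤ |m|}, R m) * 4 + (∑' k, R k) * ENNReal.ofReal (8/N)) * 4 := by
  set τ := ∑' m : {m : ℤ // (N:ℤ) ≤ |m|}, R m
  set σ := ∑' k : ℤ, R k
  set c : ℤ → ℝ≥0∞ := fun j => ∑' p : ℤ, R (j + p) * auxw (j - p) with hc
  -- inner p sum
  have step1 : ∀ (n : {n : ℤ // (N:ℤ) < |n|}) (j : ℤ),
      ∑' p : {p : ℤ // p ≠ (n:ℤ)}, R (j + p) * (auxw (j - p) * auxw ((n:ℤ) - j))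
        ≤ c j * auxw ((n:ℤ) - j) := by
    intro n j
    have h1 : ∀ p : {p : ℤ // p ≠ (n:ℤ)},
        R (j + p) * (auxw (j - p) * auxw ((n:ℤ) - j))
          = (fun q : ℤ => R (j + q) * auxw (j - q) * auxw ((n:ℤ) - j)) (p:ℤ) := by
      intro p; simp only [mul_assoc]
    rw [tsum_congr h1]
    refine le_trans (ENNReal.tsum_comp_le_tsum_of_injective
      (f := (Subtype.val : {p : ℤ // p ≠ (n:ℤ)} → ℤ)) Subtype.val_injective
      (fun q : ℤ => R (j + q) * auxw (j - q) * auxw ((n:ℤ) - j))) ?_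
    rw [ENNReal.tsum_mul_right]
  have step2 : ∀ n : {n : ℤ // (N:ℤ) < |n|},
      ∑' j : {j : ℤ // j ≠ (n:ℤ)}, c (j:ℤ) * auxw ((n:ℤ) - (j:ℤ))
        ≤ ∑' j : ℤ, c j * auxw ((n:ℤ) - j) :=
    fun n => ENNReal.tsum_comp_le_tsum_of_injective
      (f := (Subtype.val : {j : ℤ // j ≠ (n:ℤ)} → ℤ)) Subtype.val_injective
      (fun j : ℤ => c j * auxw ((n:ℤ) - j))
  calc ∑' n : {n : ℤ // (N:ℤ) < |n|}, ∑' j : {j : ℤ // j ≠ (n:ℤ)}, ∑' p : {p : ℤ // p ≠ (n:ℤ)},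
        R ((j:ℤ) + p) * (auxw ((j:ℤ) - p) * auxw ((n:ℤ) - j))
      ≤ ∑' n : {n : ℤ // (N:ℤ) < |n|}, ∑' j : ℤ, c j * auxw ((n:ℤ) - j) := by
        apply ENNReal.tsum_le_tsum
        intro n
        refine le_trans (ENNReal.tsum_le_tsum (fun j => step1 n j)) (step2 n)
    _ = ∑' j : ℤ, ∑' n : {n : ℤ // (N:ℤ) < |n|}, c j * auxw ((n:ℤ) - j) := ENNReal.tsum_comm
    _ = ∑' j : ℤ, c j * ∑' n : {n : ℤ // (N:ℤ) < |n|}, auxw ((n:ℤ) - j) := by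
        apply tsum_congr; intro j; rw [ENNReal.tsum_mul_left]
    _ ≤ ∑' j : ℤ, (c j * ENNReal.ofReal (16/N)
          + (if (3*(N:ℤ)+1 ≤ |4*j|) then c j else 0) * 4) := by
        apply ENNReal.tsum_le_tsum
        intro j
        by_cases hj : (3*(N:ℤ)+1 ≤ |4*j|)
        · rw [if_pos hj]
          exact le_trans (mul_le_mul_right (aux_s2_full N j) _) le_add_self
        · set K₁ : ℕ := N/4 + 1 with hK₁
          have hs2 : ∑' n : {n : ℤ // (N:ℤ) < |n|}, auxw ((n:ℤ) - j) ≤ ENNReal.ofReal (16/N) := by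
            refine le_trans (aux_s2 N j K₁ (by omega) ?_) (ENNReal.ofReal_le_ofReal ?_)
            · intro n
              have h1 : |4*(n:ℤ)| - |4*j| ≤ |4*(n:ℤ) - 4*j| := abs_sub_abs_le_abs_sub _ _
              have h2 : |4*(n:ℤ) - 4*j| = 4 * |(n:ℤ) - j| := by
                rw [show 4*(n:ℤ) - 4*j = 4*((n:ℤ) - j) by ring, abs_mul]; norm_num
              have h3 : |4*(n:ℤ)| = 4 * |(n:ℤ)| := by rw [abs_mul]; norm_num
              have h4 := n.2
              have h5 : 4*(K₁:ℕ) ≤ N + 4 := by omega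
              omega
            · have h4 : 4 * N ≤ 16 * K₁ := by omega
              have hNR : (0:ℝ) < (N:ℝ) := by
                have : (1:ℕ) ≤ N := hN; positivity
              have hKR : (0:ℝ) < (K₁:ℝ) := by positivity
              rw [div_le_div_iff₀ hKR hNR]
              have : ((4 * N : ℕ) : ℝ) ≤ ((16 * K₁ : ℕ) : ℝ) := by exact_mod_cast h4
              push_cast at this ⊢
              linarith
          exact le_trans (mul_le_mul_right hs2 _) le_self_add
    _ = (∑' j : ℤ, c j) * ENNReal.ofReal (16/N)
          + (∑' j : ℤ, (if (3*(N:ℤ)+1 ≤ |4*j|) then c j else 0)) * 4 := by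
        rw [ENNReal.tsum_add, ENNReal.tsum_mul_right, ENNReal.tsum_mul_right]
    _ ≤ σ * 4 * ENNReal.ofReal (16/N) + (τ * 4 + σ * ENNReal.ofReal (8/N)) * 4 := by
        apply add_le_add
        · exact mul_le_mul_left (aux_Ctot R) _
        · exact mul_le_mul_left (aux_Cbig R N hN) _
end

section
variable (R : ℤ → ℝ≥0∞) (N : ℕ)

lemma aux_JP (n : ℤ) :
    ∑' j : {j : ℤ // j ≠ n}, ∑' p : {p : ℤ // p ≠ n}, R ((j:ℤ) + p) * auxw (n - (p:ℤ))
      ≤ (∑' k, R k) * 4 := by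
  have step1 : ∀ j : {j : ℤ // j ≠ n},
      ∑' p : {p : ℤ // p ≠ n}, R ((j:ℤ) + p) * auxw (n - (p:ℤ))
        ≤ ∑' p : ℤ, R ((j:ℤ) + p) * auxw (n - p) :=
    fun j => ENNReal.tsum_comp_le_tsum_of_injective
      (f := (Subtype.val : {p : ℤ // p ≠ n} → ℤ)) Subtype.val_injective
      (fun p : ℤ => R ((j:ℤ) + p) * auxw (n - p))
  have step2 : ∑' j : {j : ℤ // j ≠ n}, ∑' p : ℤ, R ((j:ℤ) + p) * auxw (n - p)
      ≤ ∑' j : ℤ, ∑' p : ℤ, R (j + p) * auxw (n - p) :=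
    ENNReal.tsum_comp_le_tsum_of_injective
      (f := (Subtype.val : {j : ℤ // j ≠ n} → ℤ)) Subtype.val_injective
      (fun j : ℤ => ∑' p : ℤ, R (j + p) * auxw (n - p))
  calc ∑' j : {j : ℤ // j ≠ n}, ∑' p : {p : ℤ // p ≠ n}, R ((j:ℤ) + p) * auxw (n - (p:ℤ))
      ≤ ∑' j : {j : ℤ // j ≠ n}, ∑' p : ℤ, R ((j:ℤ) + p) * auxw (n - p) :=
        ENNReal.tsum_le_tsum step1
    _ ≤ ∑' j : ℤ, ∑' p : ℤ, R (j + p) * auxw (n - p) := step2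
    _ = ∑' p : ℤ, ∑' j : ℤ, R (j + p) * auxw (n - p) := ENNReal.tsum_comm
    _ = ∑' p : ℤ, (∑' j : ℤ, R (j + p)) * auxw (n - p) := by
        apply tsum_congr; intro p; rw [ENNReal.tsum_mul_right]
    _ = ∑' p : ℤ, (∑' k, R k) * auxw (n - p) := by
        apply tsum_congr; intro p
        congr 1
        exact Equiv.tsum_eq (Equiv.addRight p) R
    _ = (∑' k, R k) * ∑' p : ℤ, auxw (n - p) := ENNReal.tsum_mul_left
    _ = (∑' k, R k) * ∑' d : ℤ, auxw d := by
        congr 1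
        exact Equiv.tsum_eq (Equiv.subLeft n) auxw
    _ ≤ (∑' k, R k) * 4 := mul_le_mul_right aux_wfull _

lemma aux_point (n j p : ℤ) :
    R (j + p) * (auxw (n - j) * auxw (n - p))
      ≤ (if p = j then R (j + j) * (auxw (n - j) * auxw (n - j)) else 0)
        + (2 * (R (j + p) * (auxw (j - p) * auxw (n - j)))
           + 2 * (R (j + p) * (auxw (j - p) * auxw (n - p)))) := by
  by_cases hpj : p = j
  · subst hpj
    rw [if_pos rfl]
    exact le_self_add
  · rw [if_neg hpj, zero_add]
    have hxy : ((n - j : ℤ) : ℝ) ≠ ((n - p : ℤ) : ℝ) := by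
      intro h
      have : (n - j : ℤ) = (n - p : ℤ) := by exact_mod_cast h
      omega
    have hkey := aux_pf ((n - j : ℤ) : ℝ) ((n - p : ℤ) : ℝ) hxy
    have hxyw : ENNReal.ofReal (1/(((n - j : ℤ) : ℝ) - ((n - p : ℤ) : ℝ))^2) = auxw (j - p) := by
      rw [show ((n - j : ℤ) : ℝ) - ((n - p : ℤ) : ℝ) = ((p - j : ℤ) : ℝ) by push_cast; ring]
      show auxw (p - j) = auxw (j - p)
      rw [show p - j = -(j - p) by ring, auxw_even]
    have hw : auxw (n - j) * auxw (n - p)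
        ≤ 2 * (auxw (j - p) * (auxw (n - j) + auxw (n - p))) := by
      have h1 : auxw (n - j) = ENNReal.ofReal (1/(((n - j : ℤ) : ℝ))^2) := rfl
      have h2 : auxw (n - p) = ENNReal.ofReal (1/(((n - p : ℤ) : ℝ))^2) := rfl
      rw [h1, h2, ← hxyw]
      exact hkey
    calc R (j + p) * (auxw (n - j) * auxw (n - p))
        ≤ R (j + p) * (2 * (auxw (j - p) * (auxw (n - j) + auxw (n - p)))) :=
          mul_le_mul_right hw _
      _ = 2 * (R (j + p) * (auxw (j - p) * auxw (n - j)))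
           + 2 * (R (j + p) * (auxw (j - p) * auxw (n - p))) := by ring

lemma aux_O2 (hN : 1 ≤ N) :
    ∑' n : {n : ℤ // (N:ℤ) < |n|}, ∑' j : {j : ℤ // j ≠ (n:ℤ)}, ∑' p : {p : ℤ // p ≠ (n:ℤ)},
        R ((j:ℤ) + p) * (auxw ((j:ℤ) - p) * auxw ((n:ℤ) - p))
      ≤ (∑' k, R k) * 4 * ENNReal.ofReal (16/N)
        + ((∑' m : {m : ℤ // (N:ℤ) ≤ |m|}, R m) * 4 + (∑' k, R k) * ENNReal.ofReal (8/N)) * 4 := by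
  have hswap : ∀ n : {n : ℤ // (N:ℤ) < |n|},
      ∑' j : {j : ℤ // j ≠ (n:ℤ)}, ∑' p : {p : ℤ // p ≠ (n:ℤ)},
          R ((j:ℤ) + p) * (auxw ((j:ℤ) - p) * auxw ((n:ℤ) - p))
        = ∑' j : {j : ℤ // j ≠ (n:ℤ)}, ∑' p : {p : ℤ // p ≠ (n:ℤ)},
          R ((j:ℤ) + p) * (auxw ((j:ℤ) - p) * auxw ((n:ℤ) - j)) := by
    intro n
    rw [ENNReal.tsum_comm]
    apply tsum_congr; intro b
    apply tsum_congr; intro a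
    rw [show (a:ℤ) + b = (b:ℤ) + a by ring,
        show (a:ℤ) - b = -((b:ℤ) - a) by ring, auxw_even]
  rw [tsum_congr hswap]
  exact aux_O1 R N hN
end

theorem stmt_9 :
    ∃ C : ℝ, 0 < C ∧ ∀ (r : ℤ → ℝ), (∀ k, 0 ≤ r k) →
      Summable (fun k => (r k) ^ 2) → ∀ N : ℕ, 1 ≤ N →
      ∑' n : {n : ℤ // (N : ℤ) < |n|}, ∑' i : {i : ℤ // i ≠ (n : ℤ)},
        ∑' j : {j : ℤ // j ≠ (n : ℤ)}, ∑' p : {p : ℤ // p ≠ (n : ℤ)},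
          (r ((n : ℤ) + (i : ℤ))) ^ 2 * (r ((j : ℤ) + (p : ℤ))) ^ 2 /
            (((|(n : ℤ) - (i : ℤ)| : ℤ) : ℝ) * ((|(n : ℤ) - (j : ℤ)| : ℤ) : ℝ) *
              (((n : ℤ) - (p : ℤ) : ℤ) : ℝ) ^ 2) ≤
        C * ((∑' k : ℤ, (r k) ^ 2) / N +
            ∑' m : {m : ℤ // (N : ℤ) ≤ |m|}, (r (m : ℤ)) ^ 2) *
          (∑' k : ℤ, (r k) ^ 2) := by
  refine ⟨416, by norm_num, ?_⟩
  intro r hr hsum N hN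
  set S : ℝ := ∑' k : ℤ, (r k) ^ 2 with hSdef
  set E2 : ℝ := ∑' m : {m : ℤ // (N : ℤ) ≤ |m|}, (r (m : ℤ)) ^ 2 with hE2def
  have hS0 : 0 ≤ S := tsum_nonneg (fun k => sq_nonneg _)
  have hE0 : 0 ≤ E2 := tsum_nonneg (fun m => sq_nonneg _)
  set R : ℤ → ℝ≥0∞ := fun k => ENNReal.ofReal ((r k) ^ 2) with hRdef
  have hσ : ∑' k : ℤ, R k = ENNReal.ofReal S :=
    (ENNReal.ofReal_tsum_of_nonneg (fun k => sq_nonneg _) hsum).symm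
  have hτ : ∑' m : {m : ℤ // (N : ℤ) ≤ |m|}, R (m : ℤ) = ENNReal.ofReal E2 :=
    (ENNReal.ofReal_tsum_of_nonneg (fun m => sq_nonneg _)
      (hsum.subtype _)).symm
  -- the real atom
  set G : ℤ → ℤ → ℤ → ℤ → ℝ := fun n i j p =>
    (r (n + i)) ^ 2 * (r (j + p)) ^ 2 /
      (((|n - i| : ℤ) : ℝ) * ((|n - j| : ℤ) : ℝ) * ((n - p : ℤ) : ℝ) ^ 2) with hGdef
  have hG0 : ∀ n i j p : ℤ, 0 ≤ G n i j p := by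
    intro n i j p
    apply div_nonneg (by positivity)
    have c1 : (0:ℝ) ≤ ((|n - i| : ℤ) : ℝ) := by exact_mod_cast abs_nonneg (n - i)
    have c2 : (0:ℝ) ≤ ((|n - j| : ℤ) : ℝ) := by exact_mod_cast abs_nonneg (n - j)
    positivity
  -- ENNReal atoms
  set t1 : ℤ → ℤ → ℤ → ℤ → ℝ≥0∞ := fun n i j p =>
    R (n + i) * auxw (n - i) * (R (j + p) * auxw (n - p)) with ht1def
  set t2 : ℤ → ℤ → ℤ → ℤ → ℝ≥0∞ := fun n i j p =>
    R (n + i) * (R (j + p) * (auxw (n - j) * auxw (n - p))) with ht2def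
  have hatom : ∀ (n i j p : ℤ), i ≠ n → j ≠ n →
      ENNReal.ofReal (G n i j p) ≤ t1 n i j p + t2 n i j p := by
    intro n i j p hi hj
    have hx : ((n - i : ℤ) : ℝ) ≠ 0 := by
      rw [Int.cast_ne_zero]; omega
    have hy : ((n - j : ℤ) : ℝ) ≠ 0 := by
      rw [Int.cast_ne_zero]; omega
    have h := aux_atom ((r (n + i)) ^ 2) ((r (j + p)) ^ 2)
      ((n - i : ℤ) : ℝ) ((n - j : ℤ) : ℝ) ((n - p : ℤ) : ℝ)
      (sq_nonneg _) (sq_nonneg _) hx hy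
    have hGeq : G n i j p = (r (n + i)) ^ 2 * (r (j + p)) ^ 2 /
        (|((n - i : ℤ) : ℝ)| * |((n - j : ℤ) : ℝ)| * ((n - p : ℤ) : ℝ) ^ 2) := by
      simp only [hGdef, Int.cast_abs]
    rw [hGeq]
    exact h
  -- names for index types
  -- transfer to ENNReal
  have hRHS0 : (0:ℝ) ≤ 416 * ((E2 + S * (1/(N:ℝ))) * S) := by
    have h1 : (0:ℝ) ≤ S * (1/(N:ℝ)) := mul_nonneg hS0 (by positivity)
    have h2 : (0:ℝ) ≤ E2 + S * (1/(N:ℝ)) := add_nonneg hE0 h1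
    nlinarith
  rw [show (416 : ℝ) * ((∑' k : ℤ, (r k) ^ 2) / N + E2) * (∑' k : ℤ, (r k) ^ 2)
      = 416 * ((E2 + S * (1/(N:ℝ))) * S) by rw [← hSdef]; ring]
  rw [← ENNReal.ofReal_le_ofReal_iff hRHS0]
  -- Step 1 : push ofReal inside the four sums
  have hstep1 : ENNReal.ofReal (∑' n : {n : ℤ // (N : ℤ) < |n|}, ∑' i : {i : ℤ // i ≠ (n : ℤ)},
        ∑' j : {j : ℤ // j ≠ (n : ℤ)}, ∑' p : {p : ℤ // p ≠ (n : ℤ)}, G (n:ℤ) i j p)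
      ≤ ∑' n : {n : ℤ // (N : ℤ) < |n|}, ∑' i : {i : ℤ // i ≠ (n : ℤ)},
        ∑' j : {j : ℤ // j ≠ (n : ℤ)}, ∑' p : {p : ℤ // p ≠ (n : ℤ)},
          ENNReal.ofReal (G (n:ℤ) i j p) := by
    refine le_trans (aux_ofReal_tsum_le _ (fun n => tsum_nonneg (fun i => tsum_nonneg
      (fun j => tsum_nonneg (fun p => hG0 _ _ _ _))))) ?_
    refine ENNReal.tsum_le_tsum (fun n => ?_)
    refine le_trans (aux_ofReal_tsum_le _ (fun i => tsum_nonneg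
      (fun j => tsum_nonneg (fun p => hG0 _ _ _ _)))) ?_
    refine ENNReal.tsum_le_tsum (fun i => ?_)
    refine le_trans (aux_ofReal_tsum_le _ (fun j => tsum_nonneg (fun p => hG0 _ _ _ _))) ?_
    refine ENNReal.tsum_le_tsum (fun j => ?_)
    exact aux_ofReal_tsum_le _ (fun p => hG0 _ _ _ _)
  refine le_trans hstep1 ?_
  -- Step 2 : atom bound and split
  have hstep2 : ∑' n : {n : ℤ // (N : ℤ) < |n|}, ∑' i : {i : ℤ // i ≠ (n : ℤ)},
        ∑' j : {j : ℤ // j ≠ (n : ℤ)}, ∑' p : {p : ℤ // p ≠ (n : ℤ)},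
          ENNReal.ofReal (G (n:ℤ) i j p)
      ≤ ∑' n : {n : ℤ // (N : ℤ) < |n|}, ∑' i : {i : ℤ // i ≠ (n : ℤ)},
        ∑' j : {j : ℤ // j ≠ (n : ℤ)}, ∑' p : {p : ℤ // p ≠ (n : ℤ)},
          (t1 (n:ℤ) i j p + t2 (n:ℤ) i j p) := by
    refine ENNReal.tsum_le_tsum (fun n => ENNReal.tsum_le_tsum (fun i =>
      ENNReal.tsum_le_tsum (fun j => ENNReal.tsum_le_tsum (fun p => ?_))))
    exact hatom (n:ℤ) i j p i.2 j.2
  refine le_trans hstep2 ?_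
  have hsplit : ∑' n : {n : ℤ // (N : ℤ) < |n|}, ∑' i : {i : ℤ // i ≠ (n : ℤ)},
        ∑' j : {j : ℤ // j ≠ (n : ℤ)}, ∑' p : {p : ℤ // p ≠ (n : ℤ)},
          (t1 (n:ℤ) i j p + t2 (n:ℤ) i j p)
      = (∑' n : {n : ℤ // (N : ℤ) < |n|}, ∑' i : {i : ℤ // i ≠ (n : ℤ)},
        ∑' j : {j : ℤ // j ≠ (n : ℤ)}, ∑' p : {p : ℤ // p ≠ (n : ℤ)}, t1 (n:ℤ) i j p)
      + ∑' n : {n : ℤ // (N : ℤ) < |n|}, ∑' i : {i : ℤ // i ≠ (n : ℤ)},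
        ∑' j : {j : ℤ // j ≠ (n : ℤ)}, ∑' p : {p : ℤ // p ≠ (n : ℤ)}, t2 (n:ℤ) i j p := by
    rw [← ENNReal.tsum_add]
    apply tsum_congr; intro n
    rw [← ENNReal.tsum_add]
    apply tsum_congr; intro i
    rw [← ENNReal.tsum_add]
    apply tsum_congr; intro j
    rw [← ENNReal.tsum_add]
  rw [hsplit]
  -- Q1 bound
  have hQ1 : (∑' n : {n : ℤ // (N : ℤ) < |n|}, ∑' i : {i : ℤ // i ≠ (n : ℤ)},
        ∑' j : {j : ℤ // j ≠ (n : ℤ)}, ∑' p : {p : ℤ // p ≠ (n : ℤ)}, t1 (n:ℤ) i j p)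
      ≤ (ENNReal.ofReal E2 * 4 + ENNReal.ofReal S * ENNReal.ofReal (4/N)) *
          (ENNReal.ofReal S * 4) := by
    have hpull : ∀ (n : {n : ℤ // (N : ℤ) < |n|}) (i : {i : ℤ // i ≠ (n : ℤ)}),
        ∑' j : {j : ℤ // j ≠ (n : ℤ)}, ∑' p : {p : ℤ // p ≠ (n : ℤ)}, t1 (n:ℤ) i j p
          = (R ((n:ℤ) + i) * auxw ((n:ℤ) - i)) *
            ∑' j : {j : ℤ // j ≠ (n : ℤ)}, ∑' p : {p : ℤ // p ≠ (n : ℤ)},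
              (R ((j:ℤ) + p) * auxw ((n:ℤ) - p)) := by
      intro n i
      rw [← ENNReal.tsum_mul_left]
      apply tsum_congr; intro j
      rw [← ENNReal.tsum_mul_left]
    calc ∑' n : {n : ℤ // (N : ℤ) < |n|}, ∑' i : {i : ℤ // i ≠ (n : ℤ)},
          ∑' j : {j : ℤ // j ≠ (n : ℤ)}, ∑' p : {p : ℤ // p ≠ (n : ℤ)}, t1 (n:ℤ) i j p
        = ∑' n : {n : ℤ // (N : ℤ) < |n|}, ∑' i : {i : ℤ // i ≠ (n : ℤ)},
            (R ((n:ℤ) + i) * auxw ((n:ℤ) - i)) *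
            ∑' j : {j : ℤ // j ≠ (n : ℤ)}, ∑' p : {p : ℤ // p ≠ (n : ℤ)},
              (R ((j:ℤ) + p) * auxw ((n:ℤ) - p)) := by
          apply tsum_congr; intro n; apply tsum_congr; intro i; exact hpull n i
      _ ≤ ∑' n : {n : ℤ // (N : ℤ) < |n|}, ∑' i : {i : ℤ // i ≠ (n : ℤ)},
            (R ((n:ℤ) + i) * auxw ((n:ℤ) - i)) * ((∑' k, R k) * 4) := by
          refine ENNReal.tsum_le_tsum (fun n => ENNReal.tsum_le_tsum (fun i => ?_))
          exact mul_le_mul_right (aux_JP R (n:ℤ)) _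
      _ = (∑' n : {n : ℤ // (N : ℤ) < |n|}, ∑' i : {i : ℤ // i ≠ (n : ℤ)},
            R ((n:ℤ) + i) * auxw ((n:ℤ) - i)) * ((∑' k, R k) * 4) := by
          have e1 : ∀ n : {n : ℤ // (N : ℤ) < |n|},
              ∑' i : {i : ℤ // i ≠ (n : ℤ)},
                (R ((n:ℤ) + i) * auxw ((n:ℤ) - i)) * ((∑' k, R k) * 4)
              = (∑' i : {i : ℤ // i ≠ (n : ℤ)}, R ((n:ℤ) + i) * auxw ((n:ℤ) - i)) *
                  ((∑' k, R k) * 4) := fun n => ENNReal.tsum_mul_right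
          rw [tsum_congr e1]
          exact ENNReal.tsum_mul_right
      _ ≤ ((∑' m : {m : ℤ // (N:ℤ) ≤ |m|}, R m) * 4 + (∑' k, R k) * ENNReal.ofReal (4/N)) *
            ((∑' k, R k) * 4) := mul_le_mul_left (aux_B R N hN) _
      _ = (ENNReal.ofReal E2 * 4 + ENNReal.ofReal S * ENNReal.ofReal (4/N)) *
            (ENNReal.ofReal S * 4) := by rw [hσ, hτ]
  -- Q2 bound
  have hQ2 : (∑' n : {n : ℤ // (N : ℤ) < |n|}, ∑' i : {i : ℤ // i ≠ (n : ℤ)},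
        ∑' j : {j : ℤ // j ≠ (n : ℤ)}, ∑' p : {p : ℤ // p ≠ (n : ℤ)}, t2 (n:ℤ) i j p)
      ≤ ENNReal.ofReal S * ((ENNReal.ofReal E2 * 4 + ENNReal.ofReal S * ENNReal.ofReal (16/N))
          + (2 * (ENNReal.ofReal S * 4 * ENNReal.ofReal (16/N)
              + (ENNReal.ofReal E2 * 4 + ENNReal.ofReal S * ENNReal.ofReal (8/N)) * 4)
           + 2 * (ENNReal.ofReal S * 4 * ENNReal.ofReal (16/N)
              + (ENNReal.ofReal E2 * 4 + ENNReal.ofReal S * ENNReal.ofReal (8/N)) * 4))) := by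
    have hpull : ∀ (n : {n : ℤ // (N : ℤ) < |n|}) (i : {i : ℤ // i ≠ (n : ℤ)}),
        ∑' j : {j : ℤ // j ≠ (n : ℤ)}, ∑' p : {p : ℤ // p ≠ (n : ℤ)}, t2 (n:ℤ) i j p
          = R ((n:ℤ) + i) *
            ∑' j : {j : ℤ // j ≠ (n : ℤ)}, ∑' p : {p : ℤ // p ≠ (n : ℤ)},
              (R ((j:ℤ) + p) * (auxw ((n:ℤ) - j) * auxw ((n:ℤ) - p))) := by
      intro n i
      rw [← ENNReal.tsum_mul_left]
      apply tsum_congr; intro j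
      rw [← ENNReal.tsum_mul_left]
    have hVsum : (∑' n : {n : ℤ // (N : ℤ) < |n|}, ∑' j : {j : ℤ // j ≠ (n : ℤ)},
          ∑' p : {p : ℤ // p ≠ (n : ℤ)},
            (R ((j:ℤ) + p) * (auxw ((n:ℤ) - j) * auxw ((n:ℤ) - p))))
        ≤ ((ENNReal.ofReal E2 * 4 + ENNReal.ofReal S * ENNReal.ofReal (16/N))
          + (2 * (ENNReal.ofReal S * 4 * ENNReal.ofReal (16/N)
              + (ENNReal.ofReal E2 * 4 + ENNReal.ofReal S * ENNReal.ofReal (8/N)) * 4)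
           + 2 * (ENNReal.ofReal S * 4 * ENNReal.ofReal (16/N)
              + (ENNReal.ofReal E2 * 4 + ENNReal.ofReal S * ENNReal.ofReal (8/N)) * 4))) := by
      have hpt : ∀ (n : {n : ℤ // (N : ℤ) < |n|}) (j p : {q : ℤ // q ≠ (n : ℤ)}),
          R ((j:ℤ) + p) * (auxw ((n:ℤ) - j) * auxw ((n:ℤ) - p))
            ≤ (if (p:ℤ) = (j:ℤ) then R ((j:ℤ) + j) * (auxw ((n:ℤ) - j) * auxw ((n:ℤ) - j)) else 0)
              + (2 * (R ((j:ℤ) + p) * (auxw ((j:ℤ) - p) * auxw ((n:ℤ) - j)))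
                 + 2 * (R ((j:ℤ) + p) * (auxw ((j:ℤ) - p) * auxw ((n:ℤ) - p)))) :=
        fun n j p => aux_point R (n:ℤ) j p
      calc (∑' n : {n : ℤ // (N : ℤ) < |n|}, ∑' j : {j : ℤ // j ≠ (n : ℤ)},
            ∑' p : {p : ℤ // p ≠ (n : ℤ)},
              (R ((j:ℤ) + p) * (auxw ((n:ℤ) - j) * auxw ((n:ℤ) - p))))
          ≤ ∑' n : {n : ℤ // (N : ℤ) < |n|}, ∑' j : {j : ℤ // j ≠ (n : ℤ)},
            ∑' p : {p : ℤ // p ≠ (n : ℤ)},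
              ((if (p:ℤ) = (j:ℤ) then R ((j:ℤ) + j) * (auxw ((n:ℤ) - j) * auxw ((n:ℤ) - j)) else 0)
                + (2 * (R ((j:ℤ) + p) * (auxw ((j:ℤ) - p) * auxw ((n:ℤ) - j)))
                   + 2 * (R ((j:ℤ) + p) * (auxw ((j:ℤ) - p) * auxw ((n:ℤ) - p))))) :=
            ENNReal.tsum_le_tsum (fun n => ENNReal.tsum_le_tsum (fun j =>
              ENNReal.tsum_le_tsum (fun p => hpt n j p)))
        _ = (∑' n : {n : ℤ // (N : ℤ) < |n|}, ∑' j : {j : ℤ // j ≠ (n : ℤ)},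
              ∑' p : {p : ℤ // p ≠ (n : ℤ)},
                (if (p:ℤ) = (j:ℤ) then R ((j:ℤ) + j) * (auxw ((n:ℤ) - j) * auxw ((n:ℤ) - j)) else 0))
            + ((∑' n : {n : ℤ // (N : ℤ) < |n|}, ∑' j : {j : ℤ // j ≠ (n : ℤ)},
              ∑' p : {p : ℤ // p ≠ (n : ℤ)},
                2 * (R ((j:ℤ) + p) * (auxw ((j:ℤ) - p) * auxw ((n:ℤ) - j))))
              + (∑' n : {n : ℤ // (N : ℤ) < |n|}, ∑' j : {j : ℤ // j ≠ (n : ℤ)},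
              ∑' p : {p : ℤ // p ≠ (n : ℤ)},
                2 * (R ((j:ℤ) + p) * (auxw ((j:ℤ) - p) * auxw ((n:ℤ) - p))))) := by
            rw [← ENNReal.tsum_add, ← ENNReal.tsum_add]
            apply tsum_congr; intro n
            rw [← ENNReal.tsum_add, ← ENNReal.tsum_add]
            apply tsum_congr; intro j
            rw [← ENNReal.tsum_add, ← ENNReal.tsum_add]
        _ ≤ ((ENNReal.ofReal E2 * 4 + ENNReal.ofReal S * ENNReal.ofReal (16/N))
            + (2 * (ENNReal.ofReal S * 4 * ENNReal.ofReal (16/N)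
                + (ENNReal.ofReal E2 * 4 + ENNReal.ofReal S * ENNReal.ofReal (8/N)) * 4)
             + 2 * (ENNReal.ofReal S * 4 * ENNReal.ofReal (16/N)
                + (ENNReal.ofReal E2 * 4 + ENNReal.ofReal S * ENNReal.ofReal (8/N)) * 4))) := by
            refine add_le_add ?_ (add_le_add ?_ ?_)
            · -- diagonal
              have hdiag : ∀ (n : {n : ℤ // (N : ℤ) < |n|}) (j : {j : ℤ // j ≠ (n : ℤ)}),
                  ∑' p : {p : ℤ // p ≠ (n : ℤ)},
                    (if (p:ℤ) = (j:ℤ) then R ((j:ℤ) + j) * (auxw ((n:ℤ) - j) * auxw ((n:ℤ) - j)) else 0)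
                  ≤ R ((j:ℤ) + j) * (auxw ((n:ℤ) - j) * auxw ((n:ℤ) - j)) := by
                intro n j
                have hcomp := ENNReal.tsum_comp_le_tsum_of_injective
                  (f := (Subtype.val : {p : ℤ // p ≠ (n:ℤ)} → ℤ)) Subtype.val_injective
                  (fun q : ℤ => if q = (j:ℤ) then
                    R ((j:ℤ) + j) * (auxw ((n:ℤ) - j) * auxw ((n:ℤ) - j)) else 0)
                refine le_trans hcomp (le_of_eq ?_)
                exact tsum_ite_eq (j:ℤ) _
              refine le_trans (ENNReal.tsum_le_tsum (fun n =>
                ENNReal.tsum_le_tsum (fun j => hdiag n j))) ?_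
              refine le_trans (aux_D R N hN) ?_
              rw [hσ, hτ]
            · have hre : (∑' n : {n : ℤ // (N : ℤ) < |n|}, ∑' j : {j : ℤ // j ≠ (n : ℤ)},
                  ∑' p : {p : ℤ // p ≠ (n : ℤ)},
                    2 * (R ((j:ℤ) + p) * (auxw ((j:ℤ) - p) * auxw ((n:ℤ) - j))))
                  = 2 * ∑' n : {n : ℤ // (N : ℤ) < |n|}, ∑' j : {j : ℤ // j ≠ (n : ℤ)},
                  ∑' p : {p : ℤ // p ≠ (n : ℤ)},
                    (R ((j:ℤ) + p) * (auxw ((j:ℤ) - p) * auxw ((n:ℤ) - j))) := by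
                rw [← ENNReal.tsum_mul_left]
                apply tsum_congr; intro n
                rw [← ENNReal.tsum_mul_left]
                apply tsum_congr; intro j
                rw [← ENNReal.tsum_mul_left]
              rw [hre]
              refine mul_le_mul_right (le_trans (aux_O1 R N hN) (le_of_eq ?_)) _
              rw [hσ, hτ]
            · have hre : (∑' n : {n : ℤ // (N : ℤ) < |n|}, ∑' j : {j : ℤ // j ≠ (n : ℤ)},
                  ∑' p : {p : ℤ // p ≠ (n : ℤ)},
                    2 * (R ((j:ℤ) + p) * (auxw ((j:ℤ) - p) * auxw ((n:ℤ) - p))))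
                  = 2 * ∑' n : {n : ℤ // (N : ℤ) < |n|}, ∑' j : {j : ℤ // j ≠ (n : ℤ)},
                  ∑' p : {p : ℤ // p ≠ (n : ℤ)},
                    (R ((j:ℤ) + p) * (auxw ((j:ℤ) - p) * auxw ((n:ℤ) - p))) := by
                rw [← ENNReal.tsum_mul_left]
                apply tsum_congr; intro n
                rw [← ENNReal.tsum_mul_left]
                apply tsum_congr; intro j
                rw [← ENNReal.tsum_mul_left]
              rw [hre]
              refine mul_le_mul_right (le_trans (aux_O2 R N hN) (le_of_eq ?_)) _
              rw [hσ, hτ]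
    calc ∑' n : {n : ℤ // (N : ℤ) < |n|}, ∑' i : {i : ℤ // i ≠ (n : ℤ)},
          ∑' j : {j : ℤ // j ≠ (n : ℤ)}, ∑' p : {p : ℤ // p ≠ (n : ℤ)}, t2 (n:ℤ) i j p
        = ∑' n : {n : ℤ // (N : ℤ) < |n|}, (∑' i : {i : ℤ // i ≠ (n : ℤ)}, R ((n:ℤ) + i)) *
            ∑' j : {j : ℤ // j ≠ (n : ℤ)}, ∑' p : {p : ℤ // p ≠ (n : ℤ)},
              (R ((j:ℤ) + p) * (auxw ((n:ℤ) - j) * auxw ((n:ℤ) - p))) := by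
          apply tsum_congr; intro n
          rw [tsum_congr (fun i => hpull n i)]
          exact ENNReal.tsum_mul_right
      _ ≤ ∑' n : {n : ℤ // (N : ℤ) < |n|}, (∑' k, R k) *
            ∑' j : {j : ℤ // j ≠ (n : ℤ)}, ∑' p : {p : ℤ // p ≠ (n : ℤ)},
              (R ((j:ℤ) + p) * (auxw ((n:ℤ) - j) * auxw ((n:ℤ) - p))) := by
          refine ENNReal.tsum_le_tsum (fun n => mul_le_mul_left ?_ _)
          refine ENNReal.tsum_comp_le_tsum_of_injective
            (f := fun i : {i : ℤ // i ≠ (n:ℤ)} => (n:ℤ) + i) ?_ R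
          intro a b hab
          have hab' : (n:ℤ) + a = (n:ℤ) + b := hab
          exact Subtype.ext (by omega)
      _ = (∑' k, R k) * ∑' n : {n : ℤ // (N : ℤ) < |n|},
            ∑' j : {j : ℤ // j ≠ (n : ℤ)}, ∑' p : {p : ℤ // p ≠ (n : ℤ)},
              (R ((j:ℤ) + p) * (auxw ((n:ℤ) - j) * auxw ((n:ℤ) - p))) := ENNReal.tsum_mul_left
      _ ≤ _ := by
          rw [hσ]
          exact mul_le_mul_right hVsum _
  refine le_trans (add_le_add hQ1 hQ2) ?_
  -- final numeric computation
  have hx4 : ENNReal.ofReal (4/(N:ℝ)) = 4 * ENNReal.ofReal (1/(N:ℝ)) := by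
    rw [show (4:ℝ)/(N:ℝ) = 4 * (1/(N:ℝ)) by ring, ENNReal.ofReal_mul (by norm_num)]
    norm_num
  have hx8 : ENNReal.ofReal (8/(N:ℝ)) = 8 * ENNReal.ofReal (1/(N:ℝ)) := by
    rw [show (8:ℝ)/(N:ℝ) = 8 * (1/(N:ℝ)) by ring, ENNReal.ofReal_mul (by norm_num)]
    norm_num
  have hx16 : ENNReal.ofReal (16/(N:ℝ)) = 16 * ENNReal.ofReal (1/(N:ℝ)) := by
    rw [show (16:ℝ)/(N:ℝ) = 16 * (1/(N:ℝ)) by ring, ENNReal.ofReal_mul (by norm_num)]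
    norm_num
  rw [hx4, hx8, hx16]
  set a := ENNReal.ofReal E2
  set b := ENNReal.ofReal S
  set x := ENNReal.ofReal (1/(N:ℝ))
  have hcol : (416:ℝ≥0∞) * ((a + b * x) * b) = ENNReal.ofReal (416 * ((E2 + S * (1/(N:ℝ))) * S)) := by
    have c1 : b * x = ENNReal.ofReal (S * (1/(N:ℝ))) := (ENNReal.ofReal_mul hS0).symm
    have c2 : a + b * x = ENNReal.ofReal (E2 + S * (1/(N:ℝ))) := by
      rw [c1, ← ENNReal.ofReal_add hE0 (mul_nonneg hS0 (by positivity))]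
    have c3 : (a + b * x) * b = ENNReal.ofReal ((E2 + S * (1/(N:ℝ))) * S) := by
      rw [c2, ← ENNReal.ofReal_mul (add_nonneg hE0 (mul_nonneg hS0 (by positivity)))]
    rw [c3, show (416:ℝ≥0∞) = ENNReal.ofReal (416:ℝ) by norm_num,
        ← ENNReal.ofReal_mul (by norm_num)]
  rw [← hcol]
  calc (a * 4 + b * (4 * x)) * (b * 4)
        + b * ((a * 4 + b * (16 * x))
          + (2 * (b * 4 * (16 * x) + (a * 4 + b * (8 * x)) * 4)
           + 2 * (b * 4 * (16 * x) + (a * 4 + b * (8 * x)) * 4)))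
      = 84 * (a * b) + 416 * (b * (b * x)) := by ring
    _ ≤ 416 * (a * b) + 416 * (b * (b * x)) := by
        exact add_le_add_left (mul_le_mul_left (by norm_num) _) _
    _ = 416 * ((a + b * x) * b) := by ring
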